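/- Let P ∈ ℝ[x] with deg P = n ≥ 2, H(P) = |aₙ| (leading coefficient has maximal absolute value), and suppose there exist real numbers w > 0, κ, η with -w/2 < η < w/2 and an interval J with |J| ≥ c·Q^{-w/2-η} (for a constant c > 0 and Q ≥ 2) such that: (i) all pairwise root distances of P are at most Q^{-κ}, and (ii) |P(x)| < |aₙ| Q^{-w} for all x ∈ J. Then the discriminant satisfies |D(P)| ≤ C(n,c) · |aₙ|^{2n-2} · Q^{-w - (n-1)(n-2)κ + 2η}. -/

import Mathlib

lemma far_point (n : ℕ) (hn : 1 ≤ n) (a b : ℝ) (hab : a < b) (x : Fin n → ℂ) :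
    ∃ t ∈ Set.Icc a b, ∀ j, (b - a) / (2 * n) ≤ ‖(t : ℂ) - x j‖ := by
  set δ : ℝ := (b - a) / (2 * n) with hδdef
  have hn0 : (0:ℝ) < n := by positivity
  have hba : (0:ℝ) < b - a := by linarith
  have hδ : 0 < δ := by positivity
  set p : Fin (n+1) → ℝ := fun k => a + (k : ℕ) * ((b - a) / n) with hp
  have hmem : ∀ k, p k ∈ Set.Icc a b := by
    intro k
    constructor
    · have : (0:ℝ) ≤ (k : ℕ) * ((b - a) / n) := by positivity
      simp only [hp]; linarith
    · have hk : ((k : ℕ) : ℝ) ≤ n := by exact_mod_cast Nat.le_of_lt_succ k.2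
      have h1 : ((k : ℕ) : ℝ) * ((b - a) / n) ≤ n * ((b - a) / n) := by
        apply mul_le_mul_of_nonneg_right hk (by positivity)
      have h2 : (n:ℝ) * ((b - a) / n) = b - a := by field_simp
      simp only [hp]; linarith [h2 ▸ h1]
  by_contra hcon
  push_neg at hcon
  choose f hf using fun k => hcon (p k) (hmem k)
  obtain ⟨k, l, hkl, hfe⟩ := Fintype.exists_ne_map_eq_of_card_lt f (by simp)
  have hdist : (b - a) / n ≤ |p k - p l| := by
    have hz : ((k:ℕ):ℤ) ≠ ((l:ℕ):ℤ) := by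
      exact_mod_cast fun h => hkl (Fin.ext (by exact_mod_cast h))
    have h1 : (1:ℤ) ≤ |((k:ℕ):ℤ) - ((l:ℕ):ℤ)| := Int.one_le_abs (sub_ne_zero.mpr hz)
    have h1' : (1:ℝ) ≤ |((k:ℕ):ℝ) - ((l:ℕ):ℝ)| := by exact_mod_cast h1
    have hpe : p k - p l = (((k:ℕ):ℝ) - ((l:ℕ):ℝ)) * ((b - a) / n) := by
      simp only [hp]; ring
    rw [hpe, abs_mul, abs_of_pos (by positivity : (0:ℝ) < (b-a)/n)]
    nlinarith [h1', div_pos hba hn0]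
  have hlt : |p k - p l| < 2 * δ := by
    have h1 := hf k
    have hl := hf l
    rw [hfe] at h1
    calc |p k - p l| = ‖((p k : ℝ) : ℂ) - ((p l : ℝ):ℂ)‖ := by
          rw [← Complex.ofReal_sub, Complex.norm_real, Real.norm_eq_abs]
      _ ≤ ‖(p k : ℂ) - x (f l)‖ + ‖(p l : ℂ) - x (f l)‖ := by
          have := norm_sub_le_norm_sub_add_norm_sub ((p k : ℂ)) (x (f l)) ((p l : ℂ))
          simpa [norm_sub_rev] using this
      _ < δ + δ := add_lt_add h1 hl
      _ = 2 * δ := by ring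
  have h2δ : 2 * δ = (b-a)/n := by rw [hδdef]; field_simp
  linarith

/-- Lemma 6 of the paper: bound on the discriminant of a polynomial
that is small on an interval and has all roots within distance `Q^{-κ}`. -/
theorem stmt_7 (n : ℕ) (hn : 2 ≤ n) (c : ℝ) (hc : 0 < c) :
    ∃ C : ℝ, 0 < C ∧
      ∀ (P : Polynomial ℝ) (x : Fin n → ℂ) (Q w κ η a b : ℝ),
        P.natDegree = n →
        (∀ i, |P.coeff i| ≤ |P.leadingCoeff|) →
        2 ≤ Q → 0 < w → -w / 2 < η → η < w / 2 →
        c * Q ^ (-w / 2 - η) ≤ b - a →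
        P.map (algebraMap ℝ ℂ) =
          Polynomial.C ((P.leadingCoeff : ℂ)) * ∏ i, (Polynomial.X - Polynomial.C (x i)) →
        (∀ i j, ‖x i - x j‖ ≤ Q ^ (-κ)) →
        (∀ t ∈ Set.Icc a b, |P.eval t| < |P.leadingCoeff| * Q ^ (-w)) →
        ‖(P.leadingCoeff : ℂ) ^ (2 * n - 2) *
            ∏ i, ∏ j ∈ Finset.Ioi i, (x i - x j) ^ 2‖ ≤
          C * |P.leadingCoeff| ^ (2 * n - 2) *
            Q ^ (-w - ((n : ℝ) - 1) * ((n : ℝ) - 2) * κ + 2 * η) := by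
  refine ⟨((2:ℝ)^n * n / c)^2, by positivity, ?_⟩
  intro P x Q w κ η a b hdeg hcoeff hQ hw hη1 hη2 hJ hmap hroots hsmall
  have hn0 : (0:ℝ) < n := by positivity
  have hQ0 : (0:ℝ) < Q := by linarith
  have hrpos : ∀ r : ℝ, 0 < Q ^ r := fun r => Real.rpow_pos_of_pos hQ0 r
  have hP0 : P ≠ 0 := by
    intro h; rw [h] at hdeg; simp at hdeg; omega
  have ha0 : P.leadingCoeff ≠ 0 := Polynomial.leadingCoeff_ne_zero.mpr hP0
  have haA : 0 < |P.leadingCoeff| := abs_pos.mpr ha0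
  have hba : 0 < b - a := lt_of_lt_of_le (by positivity) hJ
  have hab : a < b := by linarith
  obtain ⟨t, htmem, htfar⟩ := far_point n (by omega) a b hab x
  set δ : ℝ := (b - a) / (2 * n) with hδdef
  have hδ : 0 < δ := by positivity
  -- evaluation formula
  have habs : ∀ s : ℝ, |P.eval s| = |P.leadingCoeff| * ∏ i, ‖(s:ℂ) - x i‖ := by
    intro s
    have h1 : ((P.map (algebraMap ℝ ℂ)).eval ((algebraMap ℝ ℂ) s)) = algebraMap ℝ ℂ (P.eval s) := by
      rw [Polynomial.eval_map, Polynomial.eval₂_at_apply]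
    rw [hmap] at h1
    have h2 : ((P.eval s : ℝ) : ℂ) = (P.leadingCoeff : ℂ) * ∏ i, ((s:ℂ) - x i) := by
      simpa [Polynomial.eval_prod] using h1.symm
    have := congrArg (‖·‖) h2
    simpa [norm_mul, norm_prod, Complex.norm_real] using this
  -- product over all roots at t is small
  have hPt := hsmall t htmem
  rw [habs t] at hPt
  have hprod : ∏ i, ‖(t:ℂ) - x i‖ < Q ^ (-w) :=
    lt_of_mul_lt_mul_left hPt (abs_nonneg _)
  -- closest root
  obtain ⟨i₁, -, hmin⟩ := Finset.exists_min_image Finset.univ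
    (fun i => ‖(t:ℂ) - x i‖) ⟨⟨0, by omega⟩, Finset.mem_univ _⟩
  set g : Fin n → Fin n → ℝ := fun i j => ‖x i - x j‖ with hgdef
  have hgsym : ∀ i j, g i j = g j i := fun i j => norm_sub_rev _ _
  have hgnn : ∀ i j, 0 ≤ g i j := fun i j => norm_nonneg _
  have hgQ : ∀ i j, g i j ≤ Q ^ (-κ) := fun i j => hroots i j
  -- split the product over all roots at i₁
  have hsplit : ∏ i, ‖(t:ℂ) - x i‖
      = ‖(t:ℂ) - x i₁‖ * ∏ j ∈ Finset.univ.erase i₁, ‖(t:ℂ) - x j‖ :=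
    (Finset.mul_prod_erase Finset.univ _ (Finset.mem_univ i₁)).symm
  have hcnn : 0 ≤ ∏ j ∈ Finset.univ.erase i₁, ‖(t:ℂ) - x j‖ :=
    Finset.prod_nonneg fun j _ => norm_nonneg _
  have hP1t : ∏ j ∈ Finset.univ.erase i₁, ‖(t:ℂ) - x j‖ ≤ Q ^ (-w) / δ := by
    rw [le_div_iff₀ hδ]
    have h1 : δ ≤ ‖(t:ℂ) - x i₁‖ := htfar i₁
    nlinarith [hsplit ▸ hprod]
  -- the product of distances from x i₁ to other roots
  have hP1 : ∏ j ∈ Finset.univ.erase i₁, g i₁ j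
      ≤ 2 ^ (n-1) * (Q ^ (-w) / δ) := by
    have step : ∏ j ∈ Finset.univ.erase i₁, g i₁ j
        ≤ ∏ j ∈ Finset.univ.erase i₁, (2 * ‖(t:ℂ) - x j‖) := by
      apply Finset.prod_le_prod (fun j _ => hgnn i₁ j)
      intro j _
      have h1 : ‖x i₁ - x j‖
          ≤ ‖x i₁ - (t:ℂ)‖ + ‖(t:ℂ) - x j‖ :=
        norm_sub_le_norm_sub_add_norm_sub (x i₁) ((t:ℂ)) (x j)
      have h2 : ‖x i₁ - (t:ℂ)‖ = ‖(t:ℂ) - x i₁‖ :=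
        norm_sub_rev _ _
      have h3 := hmin j (Finset.mem_univ j)
      simp only [hgdef]
      calc ‖x i₁ - x j‖
          ≤ ‖(t:ℂ) - x i₁‖ + ‖(t:ℂ) - x j‖ := by rw [← h2]; exact h1
        _ ≤ 2 * ‖(t:ℂ) - x j‖ := by linarith
    have hcard : (Finset.univ.erase i₁).card = n - 1 := by
      rw [Finset.card_erase_of_mem (Finset.mem_univ i₁)]; simp
    calc ∏ j ∈ Finset.univ.erase i₁, g i₁ j
        ≤ ∏ j ∈ Finset.univ.erase i₁, (2 * ‖(t:ℂ) - x j‖) := step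
      _ = 2 ^ (n-1) * ∏ j ∈ Finset.univ.erase i₁, ‖(t:ℂ) - x j‖ := by
          rw [Finset.prod_mul_distrib, Finset.prod_const, hcard]
      _ ≤ 2 ^ (n-1) * (Q ^ (-w) / δ) := by
          apply mul_le_mul_of_nonneg_left hP1t (by positivity)
  have hM : 2 ^ (n-1) * (Q ^ (-w) / δ) ≤ (2^n * n / c) * Q ^ (-w/2 + η) := by
    have e1 : (2:ℝ) ^ (n-1) * (Q ^ (-w) / δ) = (2^n * n) * (Q ^ (-w) / (b - a)) := by
      have h2 : (2:ℝ)^n = 2^(n-1) * 2 := by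
        rw [← pow_succ]; congr 1; omega
      rw [hδdef, h2]; field_simp
    have e2 : Q ^ (-w) / (b - a) ≤ Q ^ (-w) / (c * Q ^ (-w/2 - η)) := by
      gcongr
    have e3 : Q ^ (-w) / (c * Q ^ (-w/2 - η)) = (1/c) * Q ^ (-w/2 + η) := by
      have hmul : Q ^ (-w/2 + η) * Q ^ (-w/2 - η) = Q ^ (-w) := by
        rw [← Real.rpow_add hQ0]; congr 1; ring
      have hkey : (1/c) * Q ^ (-w/2 + η) * (c * Q ^ (-w/2 - η)) = Q ^ (-w) := by
        rw [show (1/c) * Q ^ (-w/2 + η) * (c * Q ^ (-w/2 - η))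
            = (c/c) * (Q ^ (-w/2 + η) * Q ^ (-w/2 - η)) by ring, div_self hc.ne', hmul, one_mul]
      rw [div_eq_iff (ne_of_gt (by positivity : (0:ℝ) < c * Q ^ (-w/2 - η)))]
      exact hkey.symm
    rw [e1]
    calc (2^n * (n:ℝ)) * (Q ^ (-w) / (b - a))
        ≤ (2^n * n) * (Q ^ (-w) / (c * Q ^ (-w/2 - η))) := by
          apply mul_le_mul_of_nonneg_left e2 (by positivity)
      _ = (2^n * n / c) * Q ^ (-w/2 + η) := by rw [e3]; ring
  have hP1' : ∏ j ∈ Finset.univ.erase i₁, g i₁ j ≤ (2^n * n / c) * Q ^ (-w/2 + η) :=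
    le_trans hP1 hM
  -- rewrite the LHS
  have hLHS : ‖(P.leadingCoeff : ℂ) ^ (2 * n - 2) *
      ∏ i, ∏ j ∈ Finset.Ioi i, (x i - x j) ^ 2‖
      = |P.leadingCoeff| ^ (2*n-2) * ∏ i, ∏ j ∈ Finset.Ioi i, (g i j) ^ 2 := by
    simp [norm_mul, norm_pow, norm_prod, Complex.norm_real, hgdef]
  rw [hLHS]
  -- off-diagonal identity
  have hoff : ∏ i, ∏ j ∈ Finset.Ioi i, (g i j) ^ 2
      = ∏ i, ∏ j ∈ Finset.univ.erase i, g i j := by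
    have h1 : ∏ i, ∏ j ∈ Finset.Ioi i, (g i j) ^ 2
        = ∏ i, ∏ j ∈ Finset.Ioi i, (g j i * g i j) := by
      apply Finset.prod_congr rfl; intro i _
      apply Finset.prod_congr rfl; intro j _
      rw [hgsym i j]; ring
    have h2 : ∏ i, ∏ j ∈ Finset.Ioi i, (g j i * g i j)
        = ∏ i, ∏ j ∈ ({i}ᶜ : Finset (Fin n)), g j i := by
      convert Finset.prod_prod_Ioi_mul_eq_prod_prod_off_diag g using 2
    rw [h1, h2]
    apply Finset.prod_congr rfl; intro i _
    rw [Finset.compl_singleton]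
    exact Finset.prod_congr rfl fun j _ => (hgsym j i)
  rw [hoff]
  -- split the double product at i₁
  have hsplit2 : ∏ i, ∏ j ∈ Finset.univ.erase i, g i j
      = (∏ j ∈ Finset.univ.erase i₁, g i₁ j)
        * ∏ i ∈ Finset.univ.erase i₁, ∏ j ∈ Finset.univ.erase i, g i j :=
    (Finset.mul_prod_erase Finset.univ _ (Finset.mem_univ i₁)).symm
  have hinner : ∀ i ∈ Finset.univ.erase i₁,
      ∏ j ∈ Finset.univ.erase i, g i j
        = g i i₁ * ∏ j ∈ (Finset.univ.erase i).erase i₁, g i j := by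
    intro i hi
    have hi' : i ≠ i₁ := (Finset.mem_erase.mp hi).1
    exact (Finset.mul_prod_erase _ _ (Finset.mem_erase.mpr ⟨hi'.symm, Finset.mem_univ _⟩)).symm
  have hrest : ∏ i ∈ Finset.univ.erase i₁, ∏ j ∈ Finset.univ.erase i, g i j
      = (∏ j ∈ Finset.univ.erase i₁, g i₁ j)
        * ∏ i ∈ Finset.univ.erase i₁, ∏ j ∈ (Finset.univ.erase i).erase i₁, g i j := by
    rw [Finset.prod_congr rfl hinner, Finset.prod_mul_distrib]
    congr 1
    exact Finset.prod_congr rfl fun i _ => (hgsym i i₁)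
  -- bound the remaining product
  have hR : ∏ i ∈ Finset.univ.erase i₁, ∏ j ∈ (Finset.univ.erase i).erase i₁, g i j
      ≤ (Q ^ (-κ)) ^ ((n-1) * (n-2)) := by
    have hQκ : (0:ℝ) ≤ Q ^ (-κ) := (hrpos _).le
    calc ∏ i ∈ Finset.univ.erase i₁, ∏ j ∈ (Finset.univ.erase i).erase i₁, g i j
        ≤ ∏ i ∈ Finset.univ.erase i₁, ∏ j ∈ (Finset.univ.erase i).erase i₁, Q ^ (-κ) := by
          apply Finset.prod_le_prod
          · intro i _; exact Finset.prod_nonneg fun j _ => hgnn i j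
          · intro i _
            exact Finset.prod_le_prod (fun j _ => hgnn i j) (fun j _ => hgQ i j)
      _ = ∏ i ∈ Finset.univ.erase i₁, (Q ^ (-κ)) ^ ((Finset.univ.erase i).erase i₁).card := by
          exact Finset.prod_congr rfl fun i _ => Finset.prod_const _
      _ = (Q ^ (-κ)) ^ ((n-1) * (n-2)) := by
          have hc1 : ∀ i ∈ Finset.univ.erase i₁, ((Finset.univ.erase i).erase i₁).card = n - 2 := by
            intro i hi
            have hi' : i ≠ i₁ := (Finset.mem_erase.mp hi).1
            rw [Finset.card_erase_of_mem (Finset.mem_erase.mpr ⟨hi'.symm, Finset.mem_univ _⟩),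
              Finset.card_erase_of_mem (Finset.mem_univ i)]
            simp only [Finset.card_univ, Fintype.card_fin]
            omega
          rw [Finset.prod_congr rfl (fun i hi => by rw [hc1 i hi]), Finset.prod_const,
            ← pow_mul, Finset.card_erase_of_mem (Finset.mem_univ i₁)]
          simp only [Finset.card_univ, Fintype.card_fin]
          rw [Nat.mul_comm]
  -- final assembly
  have hP1nn : 0 ≤ ∏ j ∈ Finset.univ.erase i₁, g i₁ j :=
    Finset.prod_nonneg fun j _ => hgnn i₁ j
  have hMnn : (0:ℝ) ≤ 2^n * n / c * Q ^ (-w/2 + η) := by positivity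
  have key : ∏ i, ∏ j ∈ Finset.univ.erase i, g i j
      ≤ ((2^n * n / c) * Q ^ (-w/2 + η))^2 * (Q ^ (-κ)) ^ ((n-1) * (n-2)) := by
    rw [hsplit2, hrest]
    have h1 : (∏ j ∈ Finset.univ.erase i₁, g i₁ j) * (∏ j ∈ Finset.univ.erase i₁, g i₁ j)
        ≤ ((2^n * n / c) * Q ^ (-w/2 + η))^2 := by
      rw [sq]
      exact mul_le_mul hP1' hP1' hP1nn hMnn
    calc (∏ j ∈ Finset.univ.erase i₁, g i₁ j) * ((∏ j ∈ Finset.univ.erase i₁, g i₁ j)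
          * ∏ i ∈ Finset.univ.erase i₁, ∏ j ∈ (Finset.univ.erase i).erase i₁, g i j)
        = ((∏ j ∈ Finset.univ.erase i₁, g i₁ j) * (∏ j ∈ Finset.univ.erase i₁, g i₁ j))
          * ∏ i ∈ Finset.univ.erase i₁, ∏ j ∈ (Finset.univ.erase i).erase i₁, g i j := by ring
      _ ≤ ((2^n * n / c) * Q ^ (-w/2 + η))^2 * (Q ^ (-κ)) ^ ((n-1) * (n-2)) := by
          apply mul_le_mul h1 hR
            (Finset.prod_nonneg fun i _ => Finset.prod_nonneg fun j _ => hgnn i j)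
            (by positivity)
  -- rpow arithmetic
  have hrw : ((2^n * (n:ℝ) / c) * Q ^ (-w/2 + η))^2 * (Q ^ (-κ)) ^ ((n-1) * (n-2))
      = (2^n * n / c)^2 * Q ^ (-w - ((n:ℝ) - 1) * ((n:ℝ) - 2) * κ + 2 * η) := by
    have c1 : (Q ^ (-w/2 + η))^2 = Q ^ (2 * (-w/2 + η)) := by
      rw [← Real.rpow_natCast (Q ^ (-w/2 + η)) 2, ← Real.rpow_mul hQ0.le]
      congr 1; push_cast; ring
    have c2 : (Q ^ (-κ)) ^ ((n-1) * (n-2)) = Q ^ (-κ * (((n-1) * (n-2) : ℕ) : ℝ)) := by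
      rw [← Real.rpow_natCast (Q ^ (-κ)) ((n-1)*(n-2)), ← Real.rpow_mul hQ0.le]
    have c3 : (((n-1) * (n-2) : ℕ) : ℝ) = ((n:ℝ) - 1) * ((n:ℝ) - 2) := by
      push_cast [Nat.cast_sub (by omega : 1 ≤ n), Nat.cast_sub hn]
      ring
    rw [mul_pow, c1, c2, c3, mul_assoc, ← Real.rpow_add hQ0]
    congr 1
    ring
  calc |P.leadingCoeff| ^ (2*n-2) * ∏ i, ∏ j ∈ Finset.univ.erase i, g i j
      ≤ |P.leadingCoeff| ^ (2*n-2)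
        * (((2^n * n / c) * Q ^ (-w/2 + η))^2 * (Q ^ (-κ)) ^ ((n-1) * (n-2))) :=
        mul_le_mul_of_nonneg_left key (pow_nonneg (abs_nonneg _) _)
    _ = (2^n * n / c)^2 * |P.leadingCoeff| ^ (2*n-2)
        * Q ^ (-w - ((n:ℝ) - 1) * ((n:ℝ) - 2) * κ + 2 * η) := by rw [hrw]; ring
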